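/- Let p₁, p₂ ≥ 2 with gcd(p₁,p₂) = 1. Then p₁ and p₂ are both prime if and only if for all r₁, r₂ ≥ 2 with gcd(r₁,r₂) = 1, the existence of a surjective group homomorphism from the torus-knot group G(p₁,p₂) = ⟨u, v ∣ u^{p₁} = v^{p₂}⟩ onto G(r₁,r₂) = ⟨a, b ∣ a^{r₁} = b^{r₂}⟩ implies that (r₁, r₂) = (p₁, p₂) or (r₁, r₂) = (p₂, p₁). (Corollary 4.4: a (p₁,p₂)-torus knot is minimal if and only if both p₁ and p₂ are prime.) -/
import Mathlib


/-- The single relator `x^p * (y^q)⁻¹` of the `(p,q)`-torus knot group. -/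
abbrev torusRel (p q : ℕ) : Set (FreeGroup Bool) :=
  {FreeGroup.of true ^ p * (FreeGroup.of false ^ q)⁻¹}

/-- The `(p,q)`-torus knot group `⟨x, y ∣ x^p = y^q⟩`. -/
abbrev G (p q : ℕ) : Type := PresentedGroup (torusRel p q)

namespace TorusAux

open Multiplicative Subgroup

/-- The universal property of the torus knot group. -/
def torusHom {p q : ℕ} {H : Type*} [Group H] (A B : H) (h : A ^ p = B ^ q) :
    G p q →* H :=
  PresentedGroup.toGroup (f := fun b : Bool => cond b A B) (by
    rintro r rfl
    simp [h])

@[simp] lemma torusHom_true {p q : ℕ} {H : Type*} [Group H] (A B : H) (h : A ^ p = B ^ q) :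
    torusHom A B h (PresentedGroup.of true) = A := by
  simp [torusHom]

@[simp] lemma torusHom_false {p q : ℕ} {H : Type*} [Group H] (A B : H) (h : A ^ p = B ^ q) :
    torusHom A B h (PresentedGroup.of false) = B := by
  simp [torusHom]

/-- The defining relation holds in `G p q`. -/
lemma torus_rel (p q : ℕ) :
    (PresentedGroup.of true : G p q) ^ p = (PresentedGroup.of false : G p q) ^ q := by
  have hmem : FreeGroup.of true ^ p * (FreeGroup.of false ^ q)⁻¹ ∈
      Subgroup.normalClosure (torusRel p q) :=
    Subgroup.subset_normalClosure rfl
  have h1 : PresentedGroup.mk (torusRel p q)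
      (FreeGroup.of true ^ p * (FreeGroup.of false ^ q)⁻¹) = 1 :=
    (QuotientGroup.eq_one_iff _).mpr hmem
  rw [map_mul, map_inv, map_pow, map_pow] at h1
  exact mul_inv_eq_one.mp h1

lemma range_bool {α : Type*} (g : Bool → α) : Set.range g = {g true, g false} := by
  ext x
  simp only [Set.mem_range, Set.mem_insert_iff, Set.mem_singleton_iff]
  constructor
  · rintro ⟨b, rfl⟩; cases b <;> simp
  · rintro (rfl | rfl) <;> [exact ⟨true, rfl⟩; exact ⟨false, rfl⟩]

/-- The range of a homomorphism out of `G p q` is generated by the images of the generators. -/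
lemma range_eq {p q : ℕ} {H : Type*} [Group H] (f : G p q →* H) :
    f.range = Subgroup.closure {f (PresentedGroup.of true), f (PresentedGroup.of false)} := by
  rw [MonoidHom.range_eq_map, ← PresentedGroup.closure_range_of (torusRel p q),
    MonoidHom.map_closure]
  congr 1
  rw [← Set.range_comp]
  exact range_bool _

lemma gen_mem_closure_pow {q d e : ℕ} (hde : Nat.Coprime e q) :
    (PresentedGroup.of false : G d q) ∈
      Subgroup.closure ({PresentedGroup.of true, (PresentedGroup.of false : G d q) ^ e} :
        Set (G d q)) := by
  have h1 : (1 : ℤ) = e * Nat.gcdA e q + q * Nat.gcdB e q := by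
    have := Nat.gcd_eq_gcd_ab e q
    rwa [hde, Nat.cast_one] at this
  have hmem : ((PresentedGroup.of false : G d q) ^ e) ^ Nat.gcdA e q *
      ((PresentedGroup.of true : G d q) ^ d) ^ Nat.gcdB e q ∈
      Subgroup.closure ({PresentedGroup.of true, (PresentedGroup.of false : G d q) ^ e} :
        Set (G d q)) :=
    mul_mem (zpow_mem (subset_closure (by simp)) _)
      (zpow_mem (pow_mem (subset_closure (by simp)) _) _)
  have hb : (PresentedGroup.of false : G d q) =
      ((PresentedGroup.of false : G d q) ^ e) ^ Nat.gcdA e q *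
      ((PresentedGroup.of true : G d q) ^ d) ^ Nat.gcdB e q := by
    rw [torus_rel d q, ← zpow_natCast (PresentedGroup.of false : G d q) e,
      ← zpow_natCast (PresentedGroup.of false : G d q) q, ← zpow_mul, ← zpow_mul, ← zpow_add,
      ← h1, zpow_one]
  rw [← hb] at hmem
  exact hmem

/-- If `p = d * e` with `e` coprime to `q`, there is an epimorphism `G (d*e) q ↠ G d q`. -/
lemma exists_epi_left (d e q : ℕ) (hde : Nat.Coprime e q) :
    ∃ φ : G (d * e) q →* G d q, Function.Surjective φ := by
  have hrel : (PresentedGroup.of true : G d q) ^ (d * e) =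
      ((PresentedGroup.of false : G d q) ^ e) ^ q := by
    rw [pow_mul, torus_rel d q, ← pow_mul, ← pow_mul, mul_comm]
  refine ⟨torusHom _ _ hrel, ?_⟩
  rw [← MonoidHom.range_eq_top, range_eq]
  simp only [torusHom_true, torusHom_false]
  rw [eq_top_iff, ← PresentedGroup.closure_range_of (torusRel d q), range_bool]
  refine closure_le _ |>.mpr ?_
  rintro x (rfl | rfl)
  · exact subset_closure (by simp)
  · exact gen_mem_closure_pow hde

/-- The swap epimorphism `G p q ↠ G q p`. -/
lemma exists_epi_swap (p q : ℕ) : ∃ φ : G p q →* G q p, Function.Surjective φ := by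
  have hrel : (PresentedGroup.of false : G q p) ^ p = (PresentedGroup.of true : G q p) ^ q :=
    (torus_rel q p).symm
  refine ⟨torusHom _ _ hrel, ?_⟩
  rw [← MonoidHom.range_eq_top, range_eq]
  simp only [torusHom_true, torusHom_false]
  rw [eq_top_iff, ← PresentedGroup.closure_range_of (torusRel q p), range_bool]
  refine closure_le _ |>.mpr ?_
  rintro x (rfl | rfl) <;> exact subset_closure (by simp)

end TorusAux

section Semidirect

open Multiplicative

variable {m : ℕ}

/-- Multiplication by a unit as a multiplicative automorphism of `Multiplicative (ZMod m)`. -/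
def actAut (m : ℕ) (u : (ZMod m)ˣ) : MulAut (Multiplicative (ZMod m)) :=
  MulEquiv.mk' ⟨fun x => ofAdd ((u : ZMod m) * x.toAdd),
      fun x => ofAdd (((u⁻¹ : (ZMod m)ˣ) : ZMod m) * x.toAdd),
      fun x => by simp [← mul_assoc, ← Units.val_mul],
      fun x => by simp [← mul_assoc, ← Units.val_mul]⟩
    (fun x y => by simp [mul_add])

@[simp] lemma actAut_apply (u : (ZMod m)ˣ) (x : Multiplicative (ZMod m)) :
    actAut m u x = ofAdd ((u : ZMod m) * x.toAdd) := rfl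

/-- The action of `(ZMod m)ˣ` on `Multiplicative (ZMod m)` by multiplication. -/
def actHom (m : ℕ) : (ZMod m)ˣ →* MulAut (Multiplicative (ZMod m)) where
  toFun := actAut m
  map_one' := by
    refine MulEquiv.ext fun x => ?_
    simp
  map_mul' u v := by
    refine MulEquiv.ext fun x => ?_
    simp [mul_assoc]

@[simp] lemma actHom_apply (u : (ZMod m)ˣ) (x : Multiplicative (ZMod m)) :
    actHom m u x = ofAdd ((u : ZMod m) * x.toAdd) := rfl

/-- The metacyclic group used to detect torus knot groups. -/
abbrev Hgrp (m : ℕ) : Type := Multiplicative (ZMod m) ⋊[actHom m] (ZMod m)ˣ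

lemma Hgrp_pow (x : ZMod m) (u : (ZMod m)ˣ) (k : ℕ) :
    ((⟨ofAdd x, u⟩ : Hgrp m) ^ k) =
      ⟨ofAdd ((∑ i ∈ Finset.range k, (u : ZMod m) ^ i) * x), u ^ k⟩ := by
  induction k with
  | zero =>
      refine SemidirectProduct.ext ?_ ?_
      · simp
      · simp
  | succ n ih =>
      rw [pow_succ, ih, SemidirectProduct.mul_def]
      refine SemidirectProduct.ext ?_ ?_
      · show ofAdd _ * (actHom m) (u ^ n) (ofAdd x) = ofAdd _
        simp only [actHom_apply, toAdd_ofAdd, ← ofAdd_add, Units.val_pow_eq_pow_val,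
          Finset.sum_range_succ]
        congr 1
        ring
      · show u ^ n * u = u ^ (n + 1)
        rw [pow_succ]

end Semidirect

namespace TorusAux

open Multiplicative Subgroup

/-- The hard direction: if `p` and `q` are prime, every torus-knot epimorphic image among
torus-knot groups is the same group. -/
lemma forward (p q : ℕ) (hp : p.Prime) (hq : q.Prime) (hpq : Nat.gcd p q = 1)
    (r s : ℕ) (hr : 2 ≤ r) (hs : 2 ≤ s) (hrs : Nat.gcd r s = 1)
    (h : ∃ φ : G p q →* G r s, Function.Surjective φ) :
    (r, s) = (p, q) ∨ (r, s) = (q, p) := by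
  obtain ⟨φ, hφ⟩ := h
  have hrs0 : r * s ≠ 0 := by positivity
  obtain ⟨m, hm, hmgt, hmod⟩ := Nat.exists_prime_gt_modEq_one (k := r * s) (max p q) hrs0
  haveI : Fact m.Prime := ⟨hm⟩
  have hmp : p < m := lt_of_le_of_lt (le_max_left _ _) hmgt
  have hmq : q < m := lt_of_le_of_lt (le_max_right _ _) hmgt
  have hdvd : r * s ∣ m - 1 := (Nat.modEq_iff_dvd' hm.one_lt.le).mp hmod.symm
  -- an element of order `r*s`
  obtain ⟨g, hg⟩ := IsCyclic.exists_generator (α := (ZMod m)ˣ)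
  have hog : orderOf g = m - 1 := by
    rw [orderOf_eq_card_of_forall_mem_zpowers hg, Nat.card_eq_fintype_card, ZMod.card_units]
  set c : (ZMod m)ˣ := g ^ ((m - 1) / (r * s)) with hc
  have hm1 : m - 1 ≠ 0 := Nat.sub_ne_zero_of_lt hm.one_lt
  have hoc : orderOf c = r * s := by
    rw [hc, orderOf_pow, hog, Nat.gcd_eq_right (Nat.div_dvd_of_dvd hdvd),
      Nat.div_div_self hdvd hm1]
  have hcrs : c ^ (r * s) = 1 := by rw [← hoc]; exact pow_orderOf_eq_one c
  have hcs : c ^ s ≠ 1 := by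
    intro hcon
    have h1 := orderOf_dvd_iff_pow_eq_one.mpr hcon
    rw [hoc] at h1
    have h2 := Nat.le_of_dvd (by omega) h1
    nlinarith
  have hcr : c ^ r ≠ 1 := by
    intro hcon
    have h1 := orderOf_dvd_iff_pow_eq_one.mpr hcon
    rw [hoc] at h1
    have h2 := Nat.le_of_dvd (by omega) h1
    nlinarith
  have hcs' : ((c ^ s : (ZMod m)ˣ) : ZMod m) ≠ 1 := fun hcon => hcs (Units.val_eq_one.mp hcon)
  have hcr' : ((c ^ r : (ZMod m)ˣ) : ZMod m) ≠ 1 := fun hcon => hcr (Units.val_eq_one.mp hcon)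
  -- the two distinguished elements of `Hgrp m`
  set A : Hgrp m := ⟨ofAdd (0 : ZMod m), c ^ s⟩ with hA
  set B : Hgrp m := ⟨ofAdd (1 : ZMod m), c ^ r⟩ with hB
  have hcsr : (c ^ s) ^ r = 1 := by rw [← pow_mul, mul_comm s r]; exact hcrs
  have hcrs' : (c ^ r) ^ s = 1 := by rw [← pow_mul]; exact hcrs
  have hApow : A ^ r = 1 := by
    rw [hA, Hgrp_pow, mul_zero, hcsr]
    refine SemidirectProduct.ext ?_ ?_ <;> simp
  have hgeom : (∑ i ∈ Finset.range s, ((c ^ r : (ZMod m)ˣ) : ZMod m) ^ i) = 0 := by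
    have h2 : (((c ^ r : (ZMod m)ˣ) : ZMod m)) ^ s - 1 = 0 := by
      rw [← Units.val_pow_eq_pow_val, ← pow_mul, hcrs, Units.val_one, sub_self]
    have h3 := geom_sum_mul (((c ^ r : (ZMod m)ˣ) : ZMod m)) s
    rw [h2] at h3
    rcases mul_eq_zero.mp h3 with h4 | h4
    · exact h4
    · exact absurd (sub_eq_zero.mp h4) hcr'
  have hBpow : B ^ s = 1 := by
    rw [hB, Hgrp_pow, hgeom, zero_mul, hcrs']
    refine SemidirectProduct.ext ?_ ?_ <;> simp
  have hrel : A ^ r = B ^ s := by rw [hApow, hBpow]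
  set ψ : G r s →* Hgrp m := torusHom A B hrel with hψ
  set f : G p q →* Hgrp m := ψ.comp φ with hf
  set A' : Hgrp m := f (PresentedGroup.of true) with hA'
  set B' : Hgrp m := f (PresentedGroup.of false) with hB'
  have hA'B' : A' ^ p = B' ^ q := by
    rw [hA', hB', ← map_pow, ← map_pow, torus_rel p q]
  -- ranges
  have hfr : f.range = ψ.range := by
    ext x
    constructor
    · rintro ⟨y, rfl⟩; exact ⟨φ y, rfl⟩
    · rintro ⟨y, rfl⟩; obtain ⟨z, rfl⟩ := hφ y; exact ⟨z, rfl⟩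
  have hcl : Subgroup.closure ({A', B'} : Set (Hgrp m)) =
      Subgroup.closure ({A, B} : Set (Hgrp m)) := by
    have h1 := range_eq f
    have h2 := range_eq ψ
    rw [hfr, h2] at h1
    simp only [hψ, torusHom_true, torusHom_false] at h1
    rw [← hA', ← hB'] at h1
    exact h1.symm
  have hAmem : A ∈ Subgroup.closure ({A', B'} : Set (Hgrp m)) := by
    rw [hcl]; exact subset_closure (by simp)
  have hBmem : B ∈ Subgroup.closure ({A', B'} : Set (Hgrp m)) := by
    rw [hcl]; exact subset_closure (by simp)
  -- A and B do not commute
  have hnc : ¬ Commute A B := by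
    intro hcom
    have h1 : toAdd ((A * B).left) = toAdd ((B * A).left) := by rw [hcom]
    simp only [SemidirectProduct.mul_left, hA, hB, actHom_apply, toAdd_mul, toAdd_ofAdd,
      mul_zero, mul_one, add_zero, zero_add] at h1
    exact hcs' h1
  -- the central element is trivial
  have hz : A' ^ p = 1 := by
    have hzA' : Commute (A' ^ p) A' := (Commute.refl A').pow_left p
    have hzB' : Commute (A' ^ p) B' := by rw [hA'B']; exact (Commute.refl B').pow_left q
    have hcommK : ∀ x ∈ Subgroup.closure ({A', B'} : Set (Hgrp m)), Commute (A' ^ p) x := by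
      intro x hx
      induction hx using Subgroup.closure_induction with
      | mem y hy =>
          rcases hy with rfl | hy
          · exact hzA'
          · rcases hy with rfl; exact hzB'
      | one => exact Commute.one_right _
      | mul a b _ _ ha hb => exact ha.mul_right hb
      | inv a _ ha => exact ha.inv_right
    have hzA := hcommK A hAmem
    have hzB := hcommK B hBmem
    have hzl : (A' ^ p).left = 1 := by
      have h1 : toAdd ((A' ^ p * A).left) = toAdd ((A * (A' ^ p)).left) := by rw [hzA]
      simp only [SemidirectProduct.mul_left, hA, actHom_apply, toAdd_mul, toAdd_ofAdd,
        mul_zero, add_zero, zero_add] at h1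
      have h3 : (((c ^ s : (ZMod m)ˣ) : ZMod m) - 1) * toAdd (A' ^ p).left = 0 := by
        rw [sub_mul, one_mul, ← h1, sub_self]
      rcases mul_eq_zero.mp h3 with h4 | h4
      · exact absurd (sub_eq_zero.mp h4) hcs'
      · have h5 : (A' ^ p).left = ofAdd (0 : ZMod m) := by rw [← h4]; simp
        simpa using h5
    have hzr : (A' ^ p).right = 1 := by
      have h1 : toAdd ((A' ^ p * B).left) = toAdd ((B * (A' ^ p)).left) := by rw [hzB]
      simp only [SemidirectProduct.mul_left, hB, actHom_apply, toAdd_mul, toAdd_ofAdd, hzl,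
        toAdd_one, mul_zero, mul_one, add_zero, zero_add] at h1
      exact Units.val_eq_one.mp h1
    refine SemidirectProduct.ext ?_ ?_
    · exact hzl
    · exact hzr
  have hzB : B' ^ q = 1 := by rw [← hA'B']; exact hz
  -- neither A' nor B' is trivial
  have hA'ne : A' ≠ 1 := by
    intro hcon
    apply hnc
    have hsub : Subgroup.closure ({A', B'} : Set (Hgrp m)) ≤ Subgroup.zpowers B' := by
      refine (closure_le _).mpr ?_
      rintro x (rfl | rfl)
      · rw [hcon]; exact one_mem _
      · exact mem_zpowers _
    obtain ⟨i, hi⟩ := Subgroup.mem_zpowers_iff.mp (hsub hAmem)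
    obtain ⟨j, hj⟩ := Subgroup.mem_zpowers_iff.mp (hsub hBmem)
    rw [← hi, ← hj]
    exact Commute.zpow_zpow_self B' i j
  have hB'ne : B' ≠ 1 := by
    intro hcon
    apply hnc
    have hsub : Subgroup.closure ({A', B'} : Set (Hgrp m)) ≤ Subgroup.zpowers A' := by
      refine (closure_le _).mpr ?_
      rintro x (rfl | rfl)
      · exact mem_zpowers _
      · rw [hcon]; exact one_mem _
    obtain ⟨i, hi⟩ := Subgroup.mem_zpowers_iff.mp (hsub hAmem)
    obtain ⟨j, hj⟩ := Subgroup.mem_zpowers_iff.mp (hsub hBmem)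
    rw [← hi, ← hj]
    exact Commute.zpow_zpow_self A' i j
  -- right components are nontrivial
  have hA'r_ne : A'.right ≠ 1 := by
    intro hcon
    apply hA'ne
    have hinl : A' = SemidirectProduct.inl A'.left := by
      refine SemidirectProduct.ext ?_ ?_
      · rfl
      · simpa using hcon
    have h2 : A'.left ^ p = 1 := by
      apply SemidirectProduct.inl_injective (φ := actHom m)
      rw [map_pow, ← hinl, hz, map_one]
    have h3 : (p : ZMod m) * toAdd A'.left = 0 := by
      have h4 := congrArg toAdd h2
      simpa [toAdd_pow, nsmul_eq_mul] using h4
    have hp0 : (p : ZMod m) ≠ 0 := by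
      rw [Ne, ZMod.natCast_eq_zero_iff]
      intro hdvd'
      have := Nat.le_of_dvd hp.pos hdvd'
      omega
    have h4 : toAdd A'.left = 0 := by
      rcases mul_eq_zero.mp h3 with h | h
      · exact absurd h hp0
      · exact h
    have h5 : A'.left = 1 := by
      have h6 : A'.left = ofAdd (0 : ZMod m) := by rw [← h4]; simp
      simpa using h6
    rw [hinl, h5, map_one]
  have hB'r_ne : B'.right ≠ 1 := by
    intro hcon
    apply hB'ne
    have hinl : B' = SemidirectProduct.inl B'.left := by
      refine SemidirectProduct.ext ?_ ?_
      · rfl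
      · simpa using hcon
    have h2 : B'.left ^ q = 1 := by
      apply SemidirectProduct.inl_injective (φ := actHom m)
      rw [map_pow, ← hinl, hzB, map_one]
    have h3 : (q : ZMod m) * toAdd B'.left = 0 := by
      have h4 := congrArg toAdd h2
      simpa [toAdd_pow, nsmul_eq_mul] using h4
    have hq0 : (q : ZMod m) ≠ 0 := by
      rw [Ne, ZMod.natCast_eq_zero_iff]
      intro hdvd'
      have := Nat.le_of_dvd hq.pos hdvd'
      omega
    have h4 : toAdd B'.left = 0 := by
      rcases mul_eq_zero.mp h3 with h | h
      · exact absurd h hq0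
      · exact h
    have h5 : B'.left = 1 := by
      have h6 : B'.left = ofAdd (0 : ZMod m) := by rw [← h4]; simp
      simpa using h6
    rw [hinl, h5, map_one]
  -- right components lie in the cyclic group generated by c
  have hcomap : Subgroup.closure ({A', B'} : Set (Hgrp m)) ≤
      Subgroup.comap (SemidirectProduct.rightHom) (Subgroup.zpowers c) := by
    rw [hcl]
    refine (closure_le _).mpr ?_
    rintro x (rfl | rfl)
    · refine Subgroup.mem_comap.mpr (Subgroup.mem_zpowers_iff.mpr ⟨(s : ℤ), ?_⟩)
      rw [zpow_natCast]; rfl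
    · refine Subgroup.mem_comap.mpr (Subgroup.mem_zpowers_iff.mpr ⟨(r : ℤ), ?_⟩)
      rw [zpow_natCast]; rfl
  have hA'mem : A' ∈ Subgroup.closure ({A', B'} : Set (Hgrp m)) := subset_closure (by simp)
  have hB'mem : B' ∈ Subgroup.closure ({A', B'} : Set (Hgrp m)) := subset_closure (by simp)
  have hurs : A'.right ^ (r * s) = 1 := by
    obtain ⟨k, hk0⟩ := Subgroup.mem_zpowers_iff.mp (hcomap hA'mem)
    have hk : c ^ k = A'.right := hk0
    rw [← hk, ← zpow_natCast (c ^ k) (r * s), ← zpow_mul, mul_comm k ((r * s : ℕ) : ℤ),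
      zpow_mul, zpow_natCast, hcrs, one_zpow]
  have hwrs : B'.right ^ (r * s) = 1 := by
    obtain ⟨k, hk0⟩ := Subgroup.mem_zpowers_iff.mp (hcomap hB'mem)
    have hk : c ^ k = B'.right := hk0
    rw [← hk, ← zpow_natCast (c ^ k) (r * s), ← zpow_mul, mul_comm k ((r * s : ℕ) : ℤ),
      zpow_mul, zpow_natCast, hcrs, one_zpow]
  have hright : ∀ (w : Hgrp m) (k : ℕ), (w ^ k).right = w.right ^ k := by
    intro w k
    induction k with
    | zero => rw [pow_zero, pow_zero]; rfl
    | succ n ih => rw [pow_succ, pow_succ, SemidirectProduct.mul_right, ih]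
  have hup : A'.right ^ p = 1 := by
    rw [← hright, hz]
    rfl
  have hwq : B'.right ^ q = 1 := by
    rw [← hright, hzB]
    rfl
  -- p ∣ r*s and q ∣ r*s
  have hpdvd : p ∣ r * s := by
    by_contra hcon
    have hcop : Nat.Coprime p (r * s) := (Nat.Prime.coprime_iff_not_dvd hp).mpr hcon
    have h1 : orderOf A'.right ∣ Nat.gcd p (r * s) :=
      Nat.dvd_gcd (orderOf_dvd_iff_pow_eq_one.mpr hup) (orderOf_dvd_iff_pow_eq_one.mpr hurs)
    rw [hcop] at h1
    exact hA'r_ne (orderOf_eq_one_iff.mp (Nat.dvd_one.mp h1))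
  have hqdvd : q ∣ r * s := by
    by_contra hcon
    have hcop : Nat.Coprime q (r * s) := (Nat.Prime.coprime_iff_not_dvd hq).mpr hcon
    have h1 : orderOf B'.right ∣ Nat.gcd q (r * s) :=
      Nat.dvd_gcd (orderOf_dvd_iff_pow_eq_one.mpr hwq) (orderOf_dvd_iff_pow_eq_one.mpr hwrs)
    rw [hcop] at h1
    exact hB'r_ne (orderOf_eq_one_iff.mp (Nat.dvd_one.mp h1))
  have hpq_dvd : p * q ∣ r * s := Nat.Coprime.mul_dvd_of_dvd_of_dvd hpq hpdvd hqdvd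
  -- r*s ∣ p*q
  have hclr : Subgroup.closure ({c ^ s, c ^ r} : Set (ZMod m)ˣ) =
      Subgroup.closure ({A'.right, B'.right} : Set (ZMod m)ˣ) := by
    have h1 := congrArg (Subgroup.map (SemidirectProduct.rightHom (φ := actHom m))) hcl
    rw [MonoidHom.map_closure, MonoidHom.map_closure] at h1
    have h2 : (SemidirectProduct.rightHom (φ := actHom m)) '' {A, B} = {c ^ s, c ^ r} := by
      rw [Set.image_insert_eq, Set.image_singleton]; rfl
    have h3 : (SemidirectProduct.rightHom (φ := actHom m)) '' {A', B'} =
        {A'.right, B'.right} := by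
      rw [Set.image_insert_eq, Set.image_singleton]; rfl
    rw [h2, h3] at h1
    exact h1.symm
  have hpow_pq : ∀ x ∈ Subgroup.closure ({A'.right, B'.right} : Set (ZMod m)ˣ),
      x ^ (p * q) = 1 := by
    intro x hx
    induction hx using Subgroup.closure_induction with
    | mem y hy =>
        rcases hy with rfl | hy
        · rw [pow_mul, hup, one_pow]
        · rcases hy with rfl
          rw [mul_comm, pow_mul, hwq, one_pow]
    | one => exact one_pow _
    | mul a b _ _ ha hb => rw [mul_pow, ha, hb, one_mul]
    | inv a _ ha => rw [inv_pow, ha, inv_one]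
  have hcs_mem : c ^ s ∈ Subgroup.closure ({A'.right, B'.right} : Set (ZMod m)ˣ) := by
    rw [← hclr]; exact subset_closure (by simp)
  have hcr_mem : c ^ r ∈ Subgroup.closure ({A'.right, B'.right} : Set (ZMod m)ˣ) := by
    rw [← hclr]; exact subset_closure (by simp)
  have hr_dvd : r ∣ p * q := by
    have h1 : orderOf c ∣ s * (p * q) := orderOf_dvd_iff_pow_eq_one.mpr (by
      rw [pow_mul]; exact hpow_pq _ hcs_mem)
    rw [hoc] at h1
    have h2 : s * r ∣ s * (p * q) := by rwa [mul_comm r s] at h1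
    exact (Nat.mul_dvd_mul_iff_left (by omega : 0 < s)).mp h2
  have hs_dvd : s ∣ p * q := by
    have h1 : orderOf c ∣ r * (p * q) := orderOf_dvd_iff_pow_eq_one.mpr (by
      rw [pow_mul]; exact hpow_pq _ hcr_mem)
    rw [hoc] at h1
    exact (Nat.mul_dvd_mul_iff_left (by omega : 0 < r)).mp h1
  have hrs_dvd : r * s ∣ p * q := Nat.Coprime.mul_dvd_of_dvd_of_dvd hrs hr_dvd hs_dvd
  have heq : r * s = p * q := Nat.dvd_antisymm hrs_dvd hpq_dvd
  -- endgame
  rcases (Nat.Prime.dvd_mul hp).mp hpdvd with hpr | hps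
  · rcases (Nat.Prime.dvd_mul hq).mp hqdvd with hqr | hqs
    · exfalso
      have hpqr : p * q ∣ r := Nat.Coprime.mul_dvd_of_dvd_of_dvd hpq hpr hqr
      have h1 : p * q ≤ r := Nat.le_of_dvd (by omega) hpqr
      nlinarith
    · left
      obtain ⟨a, ha⟩ := hpr
      obtain ⟨b, hb⟩ := hqs
      have h2 : (p * q) * (a * b) = (p * q) * 1 := by
        rw [mul_one]
        calc (p * q) * (a * b) = (p * a) * (q * b) := by ring
          _ = p * q := by rw [← ha, ← hb, heq]
      have hab : a * b = 1 := Nat.eq_of_mul_eq_mul_left (Nat.mul_pos hp.pos hq.pos) h2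
      have ha1 : a = 1 := Nat.dvd_one.mp ⟨b, hab.symm⟩
      have hb1 : b = 1 := by rw [ha1, one_mul] at hab; exact hab
      rw [ha, hb, ha1, hb1, mul_one, mul_one]
  · rcases (Nat.Prime.dvd_mul hq).mp hqdvd with hqr | hqs
    · right
      obtain ⟨a, ha⟩ := hqr
      obtain ⟨b, hb⟩ := hps
      have h2 : (p * q) * (a * b) = (p * q) * 1 := by
        rw [mul_one]
        calc (p * q) * (a * b) = (q * a) * (p * b) := by ring
          _ = p * q := by rw [← ha, ← hb, heq]
      have hab : a * b = 1 := Nat.eq_of_mul_eq_mul_left (Nat.mul_pos hp.pos hq.pos) h2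
      have ha1 : a = 1 := Nat.dvd_one.mp ⟨b, hab.symm⟩
      have hb1 : b = 1 := by rw [ha1, one_mul] at hab; exact hab
      rw [ha, hb, ha1, hb1, mul_one, mul_one]
    · exfalso
      have hpqs : p * q ∣ s := Nat.Coprime.mul_dvd_of_dvd_of_dvd hpq hps hqs
      have h1 : p * q ≤ s := Nat.le_of_dvd (by omega) hpqs
      nlinarith

end TorusAux

/-- Corollary 4.4: a `(p₁,p₂)`-torus knot is minimal if and only if both `p₁` and `p₂`
are prime, expressed via epimorphisms of torus-knot groups. -/
theorem torus_knot_minimal_iff_both_prime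
    (p₁ p₂ : ℕ) (hp₁ : 2 ≤ p₁) (hp₂ : 2 ≤ p₂) (hp : Nat.gcd p₁ p₂ = 1) :
    (Nat.Prime p₁ ∧ Nat.Prime p₂) ↔
      ∀ r₁ r₂ : ℕ, 2 ≤ r₁ → 2 ≤ r₂ → Nat.gcd r₁ r₂ = 1 →
        (∃ φ : G p₁ p₂ →* G r₁ r₂, Function.Surjective φ) →
        (r₁, r₂) = (p₁, p₂) ∨ (r₁, r₂) = (p₂, p₁) := by
  constructor
  · rintro ⟨hq1, hq2⟩ r₁ r₂ hr₁ hr₂ hr h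
    exact TorusAux.forward p₁ p₂ hq1 hq2 hp r₁ r₂ hr₁ hr₂ hr h
  · intro hmin
    have hne : p₁ ≠ p₂ := by
      intro hcon
      rw [hcon, Nat.gcd_self] at hp
      omega
    by_contra hcon
    rw [not_and_or] at hcon
    rcases hcon with hnp | hnp
    · obtain ⟨d, hdvd, hd2, hdlt⟩ := Nat.exists_dvd_of_not_prime2 hp₁ hnp
      obtain ⟨e, he⟩ := hdvd
      subst he
      have he2 : 2 ≤ e := by
        rcases Nat.lt_or_ge e 2 with h | h
        · interval_cases e <;> omega
        · exact h
      have hcope : Nat.Coprime e p₂ :=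
        Nat.Coprime.coprime_dvd_left (Dvd.intro_left d rfl) hp
      have hgcd : Nat.gcd d p₂ = 1 :=
        Nat.Coprime.coprime_dvd_left (Dvd.intro e rfl) hp
      rcases hmin d p₂ hd2 hp₂ hgcd (TorusAux.exists_epi_left d e p₂ hcope) with h1 | h1
      · have h2 : d = d * e := congrArg Prod.fst h1
        exact Nat.ne_of_lt hdlt h2
      · have h3 : p₂ = d * e := congrArg Prod.snd h1
        exact hne h3.symm
    · obtain ⟨d, hdvd, hd2, hdlt⟩ := Nat.exists_dvd_of_not_prime2 hp₂ hnp
      obtain ⟨e, he⟩ := hdvd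
      subst he
      have he2 : 2 ≤ e := by
        rcases Nat.lt_or_ge e 2 with h | h
        · interval_cases e <;> omega
        · exact h
      have hcope : Nat.Coprime e p₁ :=
        Nat.Coprime.coprime_dvd_left (Dvd.intro_left d rfl) (Nat.coprime_comm.mp hp)
      obtain ⟨φ₁, hφ₁⟩ := TorusAux.exists_epi_swap p₁ (d * e)
      obtain ⟨φ₂, hφ₂⟩ := TorusAux.exists_epi_left d e p₁ hcope
      obtain ⟨φ₃, hφ₃⟩ := TorusAux.exists_epi_swap d p₁
      have hepi : ∃ ψ : G p₁ (d * e) →* G p₁ d, Function.Surjective ψ :=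
        ⟨φ₃.comp (φ₂.comp φ₁), (hφ₃.comp (hφ₂.comp hφ₁))⟩
      have hgcd : Nat.gcd p₁ d = 1 :=
        Nat.Coprime.coprime_dvd_right (Dvd.intro e rfl) hp
      rcases hmin p₁ d hp₁ hd2 hgcd hepi with h1 | h1
      · have h2 : d = d * e := congrArg Prod.snd h1
        exact Nat.ne_of_lt hdlt h2
      · have h3 : p₁ = d * e := congrArg Prod.fst h1
        exact hne h3
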